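/- Let (P,<) be a finite poset and let L ⊆ 𝒥(P,<) be a subset that is closed under union and intersection and contains a strictly increasing chain J_0 ⊊ J_1 ⊊ ⋯ ⊊ J_{|P|} of |P|+1 order ideals. Then there exists a unique partial order ≺ on P that is stronger than < (i.e., p < q implies p ≺ q) such that L is exactly the set of order ideals of (P,≺). -/

import Mathlib

/-- `J` is an order ideal (lower set) with respect to the strict order relation `r`:
`p r q` and `q ∈ J` imply `p ∈ J`. -/
def IsLowerIdeal {P : Type*} (r : P → P → Prop) (J : Set P) : Prop :=
  ∀ ⦃p q : P⦄, r p q → q ∈ J → p ∈ J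

/-- Let `(P, lt)` be a finite poset (given by its strict order relation) and let
`L ⊆ 𝒥(P, lt)` be closed under union and intersection and contain a strictly increasing
chain of `|P| + 1` order ideals.  Then there is a unique partial (strict) order `r` on `P`
stronger than `lt` whose set of order ideals is exactly `L`. -/
theorem stmt0 {P : Type*} [Fintype P] (lt : P → P → Prop)
    (hirr : ∀ p, ¬ lt p p) (htr : ∀ a b c, lt a b → lt b c → lt a c)
    (L : Set (Set P))
    (hLideals : ∀ J ∈ L, IsLowerIdeal lt J)
    (hunion : ∀ J1 ∈ L, ∀ J2 ∈ L, J1 ∪ J2 ∈ L)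
    (hinter : ∀ J1 ∈ L, ∀ J2 ∈ L, J1 ∩ J2 ∈ L)
    (c : Fin (Fintype.card P + 1) → Set P)
    (hcL : ∀ i, c i ∈ L) (hcmono : StrictMono c) :
    ∃! r : P → P → Prop,
      ((∀ p, ¬ r p p) ∧ (∀ a b d, r a b → r b d → r a d) ∧
        (∀ p q, lt p q → r p q) ∧
        L = {J : Set P | IsLowerIdeal r J}) := by
  classical
  have hfin : ∀ s : Set P, s.Finite := fun s => s.toFinite
  -- cardinality of each chain element equals its index
  have hle : ∀ i : Fin (Fintype.card P + 1), (i : ℕ) ≤ (c i).ncard := by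
    intro i
    induction i using Fin.induction with
    | zero => simp
    | succ i ih =>
      have h := Set.ncard_lt_ncard (hcmono (Fin.castSucc_lt_succ (i := i))) (hfin _)
      have hcc : ((i.castSucc : Fin (Fintype.card P + 1)) : ℕ) = (i : ℕ) := rfl
      simp only [Fin.val_succ]
      omega
  have hge : ∀ i : Fin (Fintype.card P + 1), Fintype.card P - (i : ℕ) ≤ ((c i)ᶜ).ncard := by
    intro i
    induction i using Fin.reverseInduction with
    | last => simp [Fin.val_last]
    | cast i ih =>
      have hss : (c i.succ)ᶜ ⊂ (c i.castSucc)ᶜ :=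
        compl_lt_compl_iff_lt.mpr (hcmono (Fin.castSucc_lt_succ (i := i)))
      have h := Set.ncard_lt_ncard hss (hfin _)
      have hcc : ((i.castSucc : Fin (Fintype.card P + 1)) : ℕ) = (i : ℕ) := rfl
      simp only [Fin.val_succ] at ih ⊢
      omega
  have hcompl : ∀ i : Fin (Fintype.card P + 1),
      (c i).ncard + ((c i)ᶜ).ncard = Fintype.card P := by
    intro i
    rw [Set.ncard_add_ncard_compl (c i) (hfin _) (hfin _), Nat.card_eq_fintype_card]
  have hcard : ∀ i : Fin (Fintype.card P + 1), (c i).ncard = (i : ℕ) := by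
    intro i
    have h1 := hle i
    have h2 := hge i
    have h3 := hcompl i
    have h4 : (i : ℕ) ≤ Fintype.card P := Nat.lt_succ_iff.mp i.isLt
    omega
  have hc0 : c 0 = ∅ := by
    have := hcard 0
    simpa using (Set.ncard_eq_zero (hfin _)).mp (by simpa using this)
  have hctop : c (Fin.last (Fintype.card P)) = Set.univ := by
    have h1 := hcard (Fin.last (Fintype.card P))
    have h2 := hcompl (Fin.last (Fintype.card P))
    have h0 : ((c (Fin.last (Fintype.card P)))ᶜ).ncard = 0 := by
      simp [Fin.val_last] at h1; omega
    have hempty : (c (Fin.last (Fintype.card P)))ᶜ = ∅ := (Set.ncard_eq_zero (hfin _)).mp h0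
    rw [← compl_compl (c (Fin.last (Fintype.card P))), hempty, Set.compl_empty]
  -- each step adds a single element
  have hstep : ∀ i : Fin (Fintype.card P), ∃ x, c i.succ \ c i.castSucc = {x} := by
    intro i
    have hsub : c i.castSucc ⊆ c i.succ :=
      subset_of_ssubset (hcmono (Fin.castSucc_lt_succ (i := i)))
    have hd := Set.ncard_diff hsub (hfin _)
    rw [hcard, hcard] at hd
    have h1 : (c i.succ \ c i.castSucc).ncard = 1 := by
      rw [hd]
      have hcc : ((i.castSucc : Fin (Fintype.card P + 1)) : ℕ) = (i : ℕ) := rfl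
      simp only [Fin.val_succ]
      omega
    exact Set.ncard_eq_one.mp h1
  -- first index of appearance
  have hex : ∀ p : P, ∃ k, ∃ h : k < Fintype.card P + 1, p ∈ c ⟨k, h⟩ := by
    intro p
    refine ⟨Fintype.card P, Nat.lt_succ_self _, ?_⟩
    show p ∈ c (Fin.last (Fintype.card P))
    rw [hctop]; trivial
  let fi : P → ℕ := fun p => Nat.find (hex p)
  have hfi_mem : ∀ p, ∃ h : fi p < Fintype.card P + 1, p ∈ c ⟨fi p, h⟩ :=
    fun p => Nat.find_spec (hex p)
  have hfi_min : ∀ p m, m < fi p → ∀ h : m < Fintype.card P + 1, p ∉ c ⟨m, h⟩ := by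
    intro p m hm h hmem
    exact Nat.find_min (hex p) hm ⟨h, hmem⟩
  have hfi_le : ∀ p q, (∀ J ∈ L, q ∈ J → p ∈ J) → fi p ≤ fi q := by
    intro p q hpq
    obtain ⟨h, hmem⟩ := hfi_mem q
    exact Nat.find_le ⟨h, hpq _ (hcL _) hmem⟩
  have hfi_pos : ∀ p, 0 < fi p := by
    intro p
    rcases Nat.eq_zero_or_pos (fi p) with h | h
    · obtain ⟨hlt, hmem⟩ := hfi_mem p
      have h0 : (⟨fi p, hlt⟩ : Fin (Fintype.card P + 1)) = 0 := Fin.ext (by simpa using h)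
      rw [h0, hc0] at hmem
      exact absurd hmem (Set.notMem_empty p)
    · exact h
  have hfi_inj : ∀ p q, fi p = fi q → p = q := by
    intro p q heq
    obtain ⟨hp, hpm⟩ := hfi_mem p
    obtain ⟨hq, hqm⟩ := hfi_mem q
    have hpos := hfi_pos p
    have hk' : fi p - 1 < Fintype.card P := by omega
    set i : Fin (Fintype.card P) := ⟨fi p - 1, hk'⟩ with hi
    have hisucc : (i.succ : Fin (Fintype.card P + 1)) = ⟨fi p, hp⟩ := by
      apply Fin.ext; simp [hi]; omega
    have hicast : (i.castSucc : Fin (Fintype.card P + 1)) = ⟨fi p - 1, by omega⟩ := by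
      apply Fin.ext; simp [hi]
    obtain ⟨x, hx⟩ := hstep i
    have hpx : p ∈ c i.succ \ c i.castSucc := by
      constructor
      · rw [hisucc]; exact hpm
      · rw [hicast]; exact hfi_min p (fi p - 1) (by omega) _
    have hqx : q ∈ c i.succ \ c i.castSucc := by
      constructor
      · rw [hisucc]
        have he : (⟨fi p, hp⟩ : Fin (Fintype.card P + 1)) = ⟨fi q, hq⟩ :=
          Fin.ext (by simpa using heq)
        rw [he]; exact hqm
      · rw [hicast]
        exact hfi_min q (fi p - 1) (by omega) _
    rw [hx] at hpx hqx
    simp only [Set.mem_singleton_iff] at hpx hqx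
    rw [hpx, hqx]
  have hantisym : ∀ p q, (∀ J ∈ L, q ∈ J → p ∈ J) → (∀ J ∈ L, p ∈ J → q ∈ J) → p = q := by
    intro p q h1 h2
    exact hfi_inj p q (le_antisymm (hfi_le p q h1) (hfi_le q p h2))
  have huniv : Set.univ ∈ L := hctop ▸ hcL (Fin.last (Fintype.card P))
  have hempty : (∅ : Set P) ∈ L := hc0 ▸ hcL 0
  -- closure under finite intersections and unions
  have hsInter : ∀ S : Set (Set P), S ⊆ L → ⋂₀ S ∈ L := by
    intro S
    refine Set.Finite.induction_on (motive := fun S _ => S ⊆ L → ⋂₀ S ∈ L) S (Set.toFinite S) ?_ ?_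
    · intro _; simpa using huniv
    · intro a S' _ _ ih hsub
      rw [Set.sInter_insert]
      exact hinter a (hsub (Set.mem_insert a S')) _
        (ih (fun K hK => hsub (Set.mem_insert_of_mem a hK)))
  have hsUnion : ∀ S : Set (Set P), S ⊆ L → ⋃₀ S ∈ L := by
    intro S
    refine Set.Finite.induction_on (motive := fun S _ => S ⊆ L → ⋃₀ S ∈ L) S (Set.toFinite S) ?_ ?_
    · intro _; simpa using hempty
    · intro a S' _ _ ih hsub
      rw [Set.sUnion_insert]
      exact hunion a (hsub (Set.mem_insert a S')) _
        (ih (fun K hK => hsub (Set.mem_insert_of_mem a hK)))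
  -- principal ideals
  let D : P → Set P := fun q => ⋂₀ {K | K ∈ L ∧ q ∈ K}
  have hDL : ∀ q, D q ∈ L := fun q => hsInter _ (fun K hK => hK.1)
  have hDself : ∀ q, q ∈ D q := fun q K hK => hK.2
  have hDmem : ∀ q x, x ∈ D q ↔ ∀ K ∈ L, q ∈ K → x ∈ K := by
    intro q x
    constructor
    · intro h K hK hq; exact h K ⟨hK, hq⟩
    · intro h K hK; exact h K hK.1 hK.2
  refine ⟨fun p q => p ≠ q ∧ ∀ J ∈ L, q ∈ J → p ∈ J, ⟨?_, ?_, ?_, ?_⟩, ?_⟩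
  · intro p ⟨h, _⟩; exact h rfl
  · rintro a b d ⟨hab, h1⟩ ⟨hbd, h2⟩
    refine ⟨?_, fun J hJ hd => h1 J hJ (h2 J hJ hd)⟩
    intro had
    subst had
    exact hab (hantisym a b h1 h2)
  · intro p q hpq
    refine ⟨?_, fun J hJ hq => hLideals J hJ hpq hq⟩
    intro h; subst h; exact hirr p hpq
  · ext J
    simp only [Set.mem_setOf_eq]
    constructor
    · intro hJ p q hpq hq
      exact hpq.2 J hJ hq
    · intro hJ
      have hJeq : J = ⋃₀ (D '' J) := by
        ext x
        simp only [Set.mem_sUnion, Set.mem_image]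
        constructor
        · intro hx
          exact ⟨D x, ⟨x, hx, rfl⟩, hDself x⟩
        · rintro ⟨_, ⟨q, hq, rfl⟩, hx⟩
          rcases eq_or_ne x q with h | h
          · rwa [h]
          · exact hJ ⟨h, (hDmem q x).mp hx⟩ hq
      rw [hJeq]
      exact hsUnion _ (by rintro _ ⟨q, _, rfl⟩; exact hDL q)
  · rintro r' ⟨h1, h2, _, h4⟩
    funext p q
    apply propext
    constructor
    · intro hr'
      refine ⟨fun e => h1 p (e ▸ hr'), fun J hJ hq => ?_⟩
      have hJ' : IsLowerIdeal r' J := by rw [h4] at hJ; exact hJ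
      exact hJ' hr' hq
    · rintro ⟨hne, hall⟩
      have hD'ideal : IsLowerIdeal r' {x | r' x q ∨ x = q} := by
        rintro a b hab (hb | rfl)
        · exact Or.inl (h2 a b q hab hb)
        · exact Or.inl hab
      have hD'L : {x | r' x q ∨ x = q} ∈ L := by rw [h4]; exact hD'ideal
      have hp : p ∈ {x | r' x q ∨ x = q} := hall _ hD'L (Or.inr rfl)
      rcases hp with h | h
      · exact h
      · exact absurd h hne
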